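/- Let u_1,…,u_n be the standard basis of ℂⁿ, F_• the standard flag with F_q = span(u_{n−q+1},…,u_n), and E_• the opposite flag with E_q = span(u_1,…,u_q). For w ∈ S_n define X_w = { complete flags V_• in ℂⁿ : dim(V_p ∩ F_q) ≥ #{i ≤ p : w(i) ≤ q} for all 1 ≤ p, q ≤ n }, and Y_w = { complete flags V_• : dim(V_p ∩ E_q) ≥ #{i ≤ p : (w_0 w)(i) ≤ q} for all p, q }, where w_0 ∈ S_n is the permutation w_0(i) = n+1−i. Then for w, v ∈ S_n: (a) if inv(w) = inv(v) and w ≠ v then X_w ∩ Y_v = ∅; (b) X_w ∩ Y_w contains exactly one flag; (c) if inv(w) < inv(v) then X_w ∩ Y_v = ∅. -/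

import Mathlib

/-- The standard basis vector `u_j` of `ℂⁿ` (0-based). -/
noncomputable def stdBasisVec (n : ℕ) (j : Fin n) : Fin n → ℂ := Pi.single j 1

/-- The standard flag: `F q = span(u_{n-q+1}, …, u_n)` (1-based). -/
noncomputable def stdFlag (n q : ℕ) : Submodule ℂ (Fin n → ℂ) :=
  Submodule.span ℂ (stdBasisVec n '' {j : Fin n | n - q ≤ j.val})

/-- The opposite flag: `E q = span(u_1, …, u_q)` (1-based). -/
noncomputable def oppFlag (n q : ℕ) : Submodule ℂ (Fin n → ℂ) :=
  Submodule.span ℂ (stdBasisVec n '' {j : Fin n | j.val < q})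

/-- A complete flag in `ℂⁿ` (for definiteness, `V p = ⊤` for `p ≥ n`). -/
def IsCompleteFlag (n : ℕ) (V : ℕ → Submodule ℂ (Fin n → ℂ)) : Prop :=
  Monotone V ∧ (∀ p, p ≤ n → Module.finrank ℂ (V p) = p) ∧ ∀ p, n ≤ p → V p = ⊤

/-- The inversion number of `w`: `#{(i,j) : i < j, w(i) > w(j)}`. -/
def invCount (n : ℕ) (w : Equiv.Perm (Fin n)) : ℕ :=
  (Finset.univ.filter fun p : Fin n × Fin n => p.1 < p.2 ∧ w p.2 < w p.1).card

/-- `#{i ≤ p : w(i) ≤ q}` in 1-based terms, for `w ∈ S_n` (0-based: `i.val < p` and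
`(w i).val < q`). -/
def rankBound (n : ℕ) (w : Equiv.Perm (Fin n)) (p q : ℕ) : ℕ :=
  (Finset.univ.filter fun i : Fin n => i.val < p ∧ (w i).val < q).card

/-- The Schubert variety `X_w`: complete flags `V_•` with
`dim(V_p ∩ F_q) ≥ #{i ≤ p : w(i) ≤ q}` for all `p, q`, where `F_•` is the standard flag. -/
def inSchubX (n : ℕ) (w : Equiv.Perm (Fin n)) (V : ℕ → Submodule ℂ (Fin n → ℂ)) : Prop :=
  ∀ p q, p ≤ n → q ≤ n →
    rankBound n w p q ≤ Module.finrank ℂ ↥(V p ⊓ stdFlag n q)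

/-- The dual Schubert variety `Y_w`: complete flags `V_•` with
`dim(V_p ∩ E_q) ≥ #{i ≤ p : (w₀w)(i) ≤ q}` for all `p, q`, where `E_•` is the opposite flag
and `w₀(i) = n + 1 - i`; in 0-based terms `(w₀w)(i) = n - 1 - w(i)`. -/
def inSchubY (n : ℕ) (w : Equiv.Perm (Fin n)) (V : ℕ → Submodule ℂ (Fin n → ℂ)) : Prop :=
  ∀ p q, p ≤ n → q ≤ n →
    (Finset.univ.filter fun i : Fin n => i.val < p ∧ n - 1 - (w i).val < q).card ≤
      Module.finrank ℂ ↥(V p ⊓ oppFlag n q)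

/-! ### Section 1 : coordinate subspaces -/

open Finset

noncomputable def coordSpan (n : ℕ) (S : Set (Fin n)) : Submodule ℂ (Fin n → ℂ) :=
  Submodule.span ℂ (stdBasisVec n '' S)

lemma mem_coordSpan {n : ℕ} {S : Set (Fin n)} (x : Fin n → ℂ) :
    x ∈ coordSpan n S ↔ ∀ j, j ∉ S → x j = 0 := by
  classical
  constructor
  · intro hx
    refine Submodule.span_induction ?_ ?_ ?_ ?_ hx
    · rintro y ⟨j, hj, rfl⟩ k hk
      have : j ≠ k := fun h => hk (h ▸ hj)
      simp [stdBasisVec, Pi.single_eq_of_ne' this]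
    · intro j _; rfl
    · intro y z _ _ hy hz j hj; simp [hy j hj, hz j hj]
    · intro c y _ hy j hj; simp [hy j hj]
  · intro hx
    have : x = ∑ j ∈ univ.filter (· ∈ S), x j • stdBasisVec n j := by
      funext k
      rw [Finset.sum_apply]
      by_cases hk : k ∈ S
      · rw [Finset.sum_eq_single k]
        · simp [stdBasisVec]
        · intro j _ hj; simp [stdBasisVec, Pi.single_eq_of_ne' hj]
        · intro h; simp [hk] at h
      · rw [hx k hk, Finset.sum_eq_zero]
        intro j hj
        simp only [Finset.mem_filter] at hj
        have : j ≠ k := fun h => hk (h ▸ hj.2)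
        simp [stdBasisVec, Pi.single_eq_of_ne' this]
    rw [this]
    apply Submodule.sum_mem
    intro j hj
    simp only [Finset.mem_filter] at hj
    exact Submodule.smul_mem _ _ (Submodule.subset_span ⟨j, hj.2, rfl⟩)

lemma finrank_coordSpan {n : ℕ} (S : Finset (Fin n)) :
    Module.finrank ℂ ↥(coordSpan n ↑S) = S.card := by
  have he : stdBasisVec n '' ↑S = Set.range (fun j : ↥(↑S : Set (Fin n)) => stdBasisVec n j) := by
    rw [← Set.image_eq_range]
  have hb : (stdBasisVec n) = fun j => Pi.basisFun ℂ (Fin n) j := by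
    funext j; simp [stdBasisVec, Pi.basisFun_apply]
  have li : LinearIndependent ℂ (fun j : ↥(↑S : Set (Fin n)) => stdBasisVec n j) := by
    rw [hb]
    exact (Pi.basisFun ℂ (Fin n)).linearIndependent.comp _ Subtype.coe_injective
  rw [coordSpan, he, finrank_span_eq_card li]
  simp

lemma coordSpan_inf {n : ℕ} (S T : Set (Fin n)) :
    coordSpan n S ⊓ coordSpan n T = coordSpan n (S ∩ T) := by
  ext x
  simp only [Submodule.mem_inf, mem_coordSpan, Set.mem_inter_iff]
  constructor
  · rintro ⟨h1, h2⟩ j hj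
    by_cases hs : j ∈ S
    · exact h2 j (fun ht => hj ⟨hs, ht⟩)
    · exact h1 j hs
  · intro h
    exact ⟨fun j hj => h j (fun hh => hj hh.1), fun j hj => h j (fun hh => hj hh.2)⟩

lemma coordSpan_top {n : ℕ} : coordSpan n Set.univ = ⊤ := by
  ext x; simp [mem_coordSpan]

lemma coordSpan_mono {n : ℕ} {S T : Set (Fin n)} (h : S ⊆ T) : coordSpan n S ≤ coordSpan n T :=
  Submodule.span_mono (Set.image_mono h)

lemma stdFlag_eq {n q : ℕ} : stdFlag n q = coordSpan n {j : Fin n | n - q ≤ j.val} := rfl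
lemma oppFlag_eq {n q : ℕ} : oppFlag n q = coordSpan n {j : Fin n | j.val < q} := rfl

lemma coordSpan_congr {n : ℕ} {S T : Set (Fin n)} (h : S = T) : coordSpan n S = coordSpan n T := by rw [h]

/-! ### Section 2 : counting helpers -/

lemma card_filter_congr {n : ℕ} {P Q : Fin n → Prop} [DecidablePred P] [DecidablePred Q]
    (h : ∀ i, P i ↔ Q i) : (univ.filter P).card = (univ.filter Q).card := by
  congr 1
  apply Finset.filter_congr
  intro i _
  exact (h i)

lemma card_filter_mono {n : ℕ} {P Q : Fin n → Prop} [DecidablePred P] [DecidablePred Q]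
    (h : ∀ i, P i → Q i) : (univ.filter P).card ≤ (univ.filter Q).card :=
  Finset.card_le_card (fun i hi => by
    simp only [mem_filter, mem_univ, true_and] at *
    exact h i hi)

lemma card_filter_partition {n : ℕ} {P Q R : Fin n → Prop} [DecidablePred P] [DecidablePred Q]
    [DecidablePred R] (h : ∀ i, P i ↔ (Q i ∨ R i)) (hd : ∀ i, Q i → R i → False) :
    (univ.filter P).card = (univ.filter Q).card + (univ.filter R).card := by
  rw [← Finset.card_union_of_disjoint]
  · congr 1
    rw [← Finset.filter_or]
    apply Finset.filter_congr
    intro i _; exact h i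
  · rw [Finset.disjoint_filter]
    intro i _ hq hr
    exact hd i hq hr

lemma card_filter_lt_of_le {n : ℕ} (p : ℕ) (hp : p ≤ n) :
    (univ.filter fun i : Fin n => i.val < p).card = p := by
  rw [← Fintype.card_subtype]
  rw [Fintype.card_of_bijective (f := fun (i : {i : Fin n // i.val < p}) => (⟨i.1.1, i.2⟩ : Fin p))]
  · exact Fintype.card_fin p
  · constructor
    · rintro ⟨⟨i, hi⟩, hi'⟩ ⟨⟨j, hj⟩, hj'⟩ h
      simpa using congrArg Fin.val h
    · rintro ⟨j, hj⟩
      exact ⟨⟨⟨j, lt_of_lt_of_le hj hp⟩, hj⟩, rfl⟩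

lemma rankBound_clamp {n : ℕ} (w : Equiv.Perm (Fin n)) (p q : ℕ) :
    rankBound n w p q = rankBound n w (min p n) (min q n) := by
  apply card_filter_congr
  intro i
  have h1 := i.isLt
  have h2 := (w i).isLt
  omega

/-! ### Section 3 : geometric extraction -/

lemma coordSpan_bot {n : ℕ} : coordSpan n ∅ = ⊥ := by
  ext x
  simp only [mem_coordSpan, Submodule.mem_bot]
  constructor
  · intro h; funext j; exact h j (Set.notMem_empty j)
  · intro h; subst h; intro j _; rfl

lemma stdFlag_inf_oppFlag {n q : ℕ} :
    stdFlag n q ⊓ oppFlag n (n - q) = ⊥ := by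
  rw [stdFlag_eq, oppFlag_eq, coordSpan_inf]
  have : {j : Fin n | n - q ≤ j.val} ∩ {j : Fin n | j.val < n - q} = ∅ := by
    ext j
    simp only [Set.mem_inter_iff, Set.mem_setOf_eq, Set.mem_empty_iff_false, iff_false, not_and]
    omega
  rw [this, coordSpan_bot]

lemma finrank_add_le_of_le {n : ℕ} {A B W : Submodule ℂ (Fin n → ℂ)}
    (hA : A ≤ W) (hB : B ≤ W) :
    Module.finrank ℂ ↥A + Module.finrank ℂ ↥B ≤
      Module.finrank ℂ ↥W + Module.finrank ℂ ↥(A ⊓ B) := by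
  rw [← Submodule.finrank_sup_add_finrank_inf_eq A B]
  exact Nat.add_le_add_right (Submodule.finrank_mono (sup_le hA hB)) _

lemma geom_rank_le {n : ℕ} {w v : Equiv.Perm (Fin n)} {V : ℕ → Submodule ℂ (Fin n → ℂ)}
    (hV : IsCompleteFlag n V) (hX : inSchubX n w V) (hY : inSchubY n v V) :
    ∀ p q, rankBound n w p q ≤ rankBound n v p q := by
  intro p₀ q₀
  rw [rankBound_clamp w, rankBound_clamp v]
  set p := min p₀ n with hpdef
  set q := min q₀ n with hqdef
  have hp : p ≤ n := min_le_right _ _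
  have hq : q ≤ n := min_le_right _ _
  have hA := hX p q hp hq
  have hB := hY p (n - q) hp (Nat.sub_le _ _)
  -- counting identity
  have hcount : (univ.filter fun i : Fin n => i.val < p ∧ n - 1 - (v i).val < n - q).card
      + rankBound n v p q = p := by
    rw [rankBound]
    rw [← card_filter_partition (P := fun i : Fin n => i.val < p)
      (Q := fun i => i.val < p ∧ n - 1 - (v i).val < n - q)
      (R := fun i => i.val < p ∧ (v i).val < q)
      (fun i => by have := (v i).isLt; omega)
      (fun i h1 h2 => by have := (v i).isLt; omega)]
    exact card_filter_lt_of_le p hp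
  have hinf : (V p ⊓ stdFlag n q) ⊓ (V p ⊓ oppFlag n (n - q)) = ⊥ := by
    apply le_bot_iff.mp
    calc (V p ⊓ stdFlag n q) ⊓ (V p ⊓ oppFlag n (n - q)) ≤ stdFlag n q ⊓ oppFlag n (n - q) :=
          inf_le_inf inf_le_right inf_le_right
      _ = ⊥ := stdFlag_inf_oppFlag
  have hsum := finrank_add_le_of_le (A := V p ⊓ stdFlag n q) (B := V p ⊓ oppFlag n (n - q))
    (W := V p) inf_le_left inf_le_left
  rw [hinf] at hsum
  have hbot : Module.finrank ℂ (⊥ : Submodule ℂ (Fin n → ℂ)) = 0 := finrank_bot ℂ _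
  rw [hbot, Nat.add_zero] at hsum
  have hVp : Module.finrank ℂ (V p) = p := hV.2.1 p hp
  rw [hVp] at hsum
  omega

/-! ### Section 4 : combinatorics of rank matrices and inversions -/

def swF {n : ℕ} (a b : Fin n) (p : Fin n × Fin n) : Fin n × Fin n :=
  if p.2 = a then (p.1, b)
  else if p.1 = b then (a, p.2)
  else if p.2 = b ∧ p.1 < a then (p.1, a)
  else if p.1 = a ∧ b < p.2 then (b, p.2)
  else p

lemma swF_eval {n : ℕ} (a b x y : Fin n) : swF a b (x, y) =
    if y = a then (x, b)
    else if x = b then (a, y)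
    else if y = b ∧ x < a then (x, a)
    else if x = a ∧ b < y then (b, y)
    else (x, y) := rfl

lemma swF_invol {n : ℕ} {a b : Fin n} (hab : a < b) (p : Fin n × Fin n) (hp : p.1 < p.2) :
    swF a b (swF a b p) = p := by
  obtain ⟨x, y⟩ := p
  simp only at hp
  have hne : a ≠ b := ne_of_lt hab
  by_cases h1 : y = a
  · rw [h1] at hp ⊢
    have hxb : x ≠ b := ne_of_lt (lt_trans hp hab)
    have e1 : swF a b (x, a) = (x, b) := by rw [swF_eval, if_pos rfl]
    have e2 : swF a b (x, b) = (x, a) := by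
      rw [swF_eval, if_neg hne.symm, if_neg hxb, if_pos ⟨rfl, hp⟩]
    rw [e1, e2]
  · by_cases h2 : x = b
    · rw [h2] at hp ⊢
      have e1 : swF a b (b, y) = (a, y) := by rw [swF_eval, if_neg h1, if_pos rfl]
      have e2 : swF a b (a, y) = (b, y) := by
        rw [swF_eval, if_neg h1, if_neg hne, if_neg (fun h => (ne_of_gt hp) h.1),
          if_pos ⟨rfl, hp⟩]
      rw [e1, e2]
    · by_cases h3 : y = b ∧ x < a
      · rw [h3.1] at h1 ⊢
        have hxb : x ≠ b := ne_of_lt (lt_trans h3.2 hab)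
        have e1 : swF a b (x, b) = (x, a) := by
          rw [swF_eval, if_neg h1, if_neg hxb, if_pos ⟨rfl, h3.2⟩]
        have e2 : swF a b (x, a) = (x, b) := by rw [swF_eval, if_pos rfl]
        rw [e1, e2]
      · by_cases h4 : x = a ∧ b < y
        · rw [h4.1] at h2 ⊢
          have e1 : swF a b (a, y) = (b, y) := by
            rw [swF_eval, if_neg h1, if_neg hne,
              if_neg (fun h => absurd h.2 (lt_irrefl a)), if_pos ⟨rfl, h4.2⟩]
          have e2 : swF a b (b, y) = (a, y) := by rw [swF_eval, if_neg h1, if_pos rfl]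
          rw [e1, e2]
        · have e : swF a b (x, y) = (x, y) := by
            rw [swF_eval, if_neg h1, if_neg h2, if_neg h3, if_neg h4]
          rw [e, e]

lemma invCount_swap_lt {n : ℕ} (w : Equiv.Perm (Fin n)) (a b : Fin n) (hab : a < b)
    (hv : w b < w a) : invCount n (w * Equiv.swap a b) < invCount n w := by
  classical
  set w' := w * Equiv.swap a b with hw'
  have hw'a : w' a = w b := by simp [hw', Equiv.Perm.mul_apply]
  have hw'b : w' b = w a := by simp [hw', Equiv.Perm.mul_apply]
  have hw'o : ∀ z, z ≠ a → z ≠ b → w' z = w z := fun z hz1 hz2 => by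
    simp [hw', Equiv.Perm.mul_apply, Equiv.swap_apply_of_ne_of_ne hz1 hz2]
  set s := (Finset.univ.filter fun p : Fin n × Fin n => p.1 < p.2 ∧ w' p.2 < w' p.1) with hs
  set t := (Finset.univ.filter fun p : Fin n × Fin n => p.1 < p.2 ∧ w p.2 < w p.1) with ht
  have habmem : (a, b) ∈ t := by
    rw [ht, mem_filter]
    exact ⟨mem_univ _, hab, hv⟩
  have hmapsto : ∀ p ∈ s, swF a b p ∈ t.erase (a, b) := by
    rintro ⟨x, y⟩ hp
    rw [hs, mem_filter] at hp
    obtain ⟨-, hxy, hcond⟩ := hp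
    simp only at hxy hcond
    rw [Finset.mem_erase, ht, mem_filter]
    by_cases h1 : y = a
    · rw [h1] at hxy hcond
      have hxa : x ≠ a := ne_of_lt hxy
      have hxb : x ≠ b := ne_of_lt (lt_trans hxy hab)
      rw [hw'a, hw'o x hxa hxb] at hcond
      rw [swF_eval, if_pos h1]
      exact ⟨fun h => hxa (congrArg Prod.fst h), mem_univ _, lt_trans hxy hab, hcond⟩
    · by_cases h2 : x = b
      · rw [h2] at hxy hcond
        have hyb : y ≠ b := ne_of_gt hxy
        rw [hw'b, hw'o y h1 hyb] at hcond
        rw [swF_eval, if_neg h1, if_pos h2]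
        exact ⟨fun h => hyb (congrArg Prod.snd h), mem_univ _, lt_trans hab hxy, hcond⟩
      · by_cases h3 : y = b ∧ x < a
        · rw [h3.1] at hcond
          have hxa : x ≠ a := ne_of_lt h3.2
          rw [hw'b, hw'o x hxa h2] at hcond
          rw [swF_eval, if_neg h1, if_neg h2, if_pos h3]
          exact ⟨fun h => (ne_of_lt hab) (congrArg Prod.snd h), mem_univ _, h3.2, hcond⟩
        · by_cases h4 : x = a ∧ b < y
          · rw [h4.1] at hcond
            have hyb : y ≠ b := ne_of_gt h4.2
            rw [hw'a, hw'o y h1 hyb] at hcond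
            rw [swF_eval, if_neg h1, if_neg h2, if_neg (fun h => hyb h.1), if_pos h4]
            exact ⟨fun h => (ne_of_gt hab) (congrArg Prod.fst h), mem_univ _, h4.2, hcond⟩
          · rw [swF_eval, if_neg h1, if_neg h2, if_neg h3, if_neg h4]
            by_cases hyb : y = b
            · by_cases hxa : x = a
              · exfalso
                rw [hxa, hyb, hw'a, hw'b] at hcond
                exact absurd hcond (not_lt_of_gt hv)
              · have hax : a < x := by
                  rcases lt_trichotomy a x with h | h | h
                  · exact h
                  · exact absurd h.symm hxa
                  · exact absurd ⟨hyb, h⟩ h3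
                rw [hyb, hw'b, hw'o x hxa h2] at hcond
                have : w y < w x := by rw [hyb]; exact lt_trans hv hcond
                exact ⟨fun h => hxa (congrArg Prod.fst h), mem_univ _, hxy, this⟩
            · by_cases hxa : x = a
              · rw [hxa, hw'a, hw'o y h1 hyb] at hcond
                have : w y < w x := by rw [hxa]; exact lt_trans hcond hv
                exact ⟨fun h => hyb (congrArg Prod.snd h), mem_univ _, hxy, this⟩
              · rw [hw'o x hxa h2, hw'o y h1 hyb] at hcond
                exact ⟨fun h => hxa (congrArg Prod.fst h), mem_univ _, hxy, hcond⟩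
  have hinj : Set.InjOn (swF a b) ↑s := by
    intro p1 hp1 p2 hp2 heq
    rw [hs] at hp1 hp2
    simp only [Finset.coe_filter, Set.mem_setOf_eq, mem_univ, true_and] at hp1 hp2
    have := congrArg (swF a b) heq
    rwa [swF_invol hab p1 hp1.1, swF_invol hab p2 hp2.1] at this
  calc invCount n w' = s.card := rfl
    _ ≤ (t.erase (a, b)).card := Finset.card_le_card_of_injOn _ hmapsto hinj
    _ < t.card := Finset.card_erase_lt_of_mem habmem
    _ = invCount n w := rfl

lemma card_filter_single {n : ℕ} {P : Fin n → Prop} [DecidablePred P] (a : Fin n) :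
    (univ.filter fun i => i = a ∧ P i).card = if P a then 1 else 0 := by
  classical
  split_ifs with h
  · rw [Finset.card_eq_one]
    refine ⟨a, ?_⟩
    ext i
    simp only [mem_filter, mem_univ, true_and, Finset.mem_singleton]
    exact ⟨fun hh => hh.1, fun hh => ⟨hh, hh ▸ h⟩⟩
  · rw [Finset.card_eq_zero, Finset.eq_empty_iff_forall_notMem]
    intro i hi
    rw [mem_filter] at hi
    exact h (hi.2.1 ▸ hi.2.2)

lemma card_split_ab {n : ℕ} {P : Fin n → Prop} [DecidablePred P] {a b : Fin n} (hne : a ≠ b) :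
    (univ.filter P).card = (univ.filter fun i => (i ≠ a ∧ i ≠ b) ∧ P i).card
      + ((if P a then 1 else 0) + (if P b then 1 else 0)) := by
  classical
  rw [card_filter_partition (P := P) (Q := fun i => (i ≠ a ∧ i ≠ b) ∧ P i)
    (R := fun i => (i = a ∨ i = b) ∧ P i) (fun i => by tauto) (fun i => by tauto)]
  congr 1
  rw [card_filter_partition (P := fun i => (i = a ∨ i = b) ∧ P i)
    (Q := fun i => i = a ∧ P i) (R := fun i => i = b ∧ P i) (fun i => by tauto)
    (fun i h1 h2 => hne (h1.1 ▸ h2.1))]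
  rw [card_filter_single, card_filter_single]

lemma rankBound_swap_le {n : ℕ} (w : Equiv.Perm (Fin n)) (a b : Fin n) (hab : a < b)
    (hv : w b < w a) (p q : ℕ) :
    rankBound n (w * Equiv.swap a b) p q ≤ rankBound n w p q
      + (if a.val < p ∧ p ≤ b.val ∧ (w b).val < q ∧ q ≤ (w a).val then 1 else 0) := by
  classical
  set w' := w * Equiv.swap a b with hw'
  have hw'a : w' a = w b := by simp [hw', Equiv.Perm.mul_apply]
  have hw'b : w' b = w a := by simp [hw', Equiv.Perm.mul_apply]
  have hw'o : ∀ z, z ≠ a → z ≠ b → w' z = w z := fun z hz1 hz2 => by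
    simp [hw', Equiv.Perm.mul_apply, Equiv.swap_apply_of_ne_of_ne hz1 hz2]
  have hne : a ≠ b := ne_of_lt hab
  rw [rankBound, rankBound,
    card_split_ab (P := fun i => i.val < p ∧ ((w' i) : Fin n).val < q) hne,
    card_split_ab (P := fun i => i.val < p ∧ ((w i) : Fin n).val < q) hne]
  have hrest : (univ.filter fun i => (i ≠ a ∧ i ≠ b) ∧ (i.val < p ∧ (w' i).val < q)).card
      = (univ.filter fun i => (i ≠ a ∧ i ≠ b) ∧ (i.val < p ∧ (w i).val < q)).card := by
    apply card_filter_congr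
    intro i
    constructor
    · rintro ⟨h0, h5, h6⟩
      exact ⟨h0, h5, by rwa [hw'o i h0.1 h0.2] at h6⟩
    · rintro ⟨h0, h5, h6⟩
      exact ⟨h0, h5, by rwa [hw'o i h0.1 h0.2]⟩
  rw [hrest, hw'a, hw'b]
  have hab' : a.val < b.val := hab
  have hv' : (w b).val < (w a).val := hv
  split_ifs <;> omega

lemma exists_descent {n : ℕ} (w v : Equiv.Perm (Fin n)) (hne : w ≠ v)
    (h : ∀ p q, rankBound n w p q ≤ rankBound n v p q) :
    ∃ w', invCount n w' < invCount n w ∧ ∀ p q, rankBound n w' p q ≤ rankBound n v p q := by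
  classical
  -- the first index where w and v differ
  have hAne : (univ.filter fun i : Fin n => w i ≠ v i).Nonempty := by
    by_contra hc
    rw [Finset.not_nonempty_iff_eq_empty, Finset.eq_empty_iff_forall_notMem] at hc
    apply hne
    ext i
    by_contra hi
    exact hc i (mem_filter.mpr ⟨mem_univ _, fun hh => hi (congrArg Fin.val hh)⟩)
  set a := (univ.filter fun i : Fin n => w i ≠ v i).min' hAne with hadef
  have hamem : w a ≠ v a := by
    have := Finset.min'_mem _ hAne
    rw [mem_filter] at this
    exact this.2
  have hf : ∀ i : Fin n, i.val < a.val → (w i).val = (v i).val := by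
    intro i hi
    by_contra hc
    have hi' : i ∈ univ.filter fun i : Fin n => w i ≠ v i := by
      simp only [mem_filter, mem_univ, true_and]
      exact fun hh => hc (congrArg Fin.val hh)
    have := Finset.min'_le _ i hi'
    rw [← hadef] at this
    omega
  have hvne : ∀ i : Fin n, i ≠ a → (v i).val ≠ (v a).val := by
    intro i hi hc
    exact hi (v.injective (Fin.ext hc))
  -- v a < w a
  have hva : (v a).val < (w a).val := by
    have h1 := h (a.val + 1) ((w a).val + 1)
    have e1 : rankBound n w (a.val + 1) ((w a).val + 1)
        = (univ.filter fun i : Fin n => i.val < a.val ∧ (v i).val < (w a).val + 1).card + 1 := by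
      rw [rankBound]
      rw [card_filter_partition
        (Q := fun i : Fin n => i.val < a.val ∧ (v i).val < (w a).val + 1)
        (R := fun i : Fin n => i = a)
        (fun i => by
          constructor
          · rintro ⟨h5, h6⟩
            by_cases hia : i = a
            · exact Or.inr hia
            · left
              have hia' : i.val < a.val := by
                rcases lt_trichotomy i.val a.val with hh | hh | hh
                · exact hh
                · exact absurd (Fin.ext hh) hia
                · omega
              have hwv := hf i hia'
              exact ⟨hia', by omega⟩
          · rintro (⟨h5, h6⟩ | hia)
            · have hwv := hf i h5
              exact ⟨by omega, by omega⟩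
            · subst hia
              exact ⟨by omega, by omega⟩)
        (fun i hQ hR => by subst hR; omega)]
      have : (univ.filter fun i : Fin n => i = a).card = 1 := by
        rw [Finset.filter_eq']
        simp
      rw [this]
    have e2 : rankBound n v (a.val + 1) ((w a).val + 1)
        = (univ.filter fun i : Fin n => i.val < a.val ∧ (v i).val < (w a).val + 1).card
          + (if (v a).val < (w a).val + 1 then 1 else 0) := by
      rw [rankBound]
      rw [card_filter_partition
        (Q := fun i : Fin n => i.val < a.val ∧ (v i).val < (w a).val + 1)
        (R := fun i : Fin n => i = a ∧ (i.val < a.val + 1 ∧ (v i).val < (w a).val + 1))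
        (fun i => by
          constructor
          · rintro ⟨h5, h6⟩
            by_cases hia : i = a
            · exact Or.inr ⟨hia, h5, h6⟩
            · left
              have hia' : i.val < a.val := by
                rcases lt_trichotomy i.val a.val with hh | hh | hh
                · exact hh
                · exact absurd (Fin.ext hh) hia
                · omega
              exact ⟨hia', h6⟩
          · rintro (⟨h5, h6⟩ | ⟨hia, h5, h6⟩)
            · exact ⟨by omega, h6⟩
            · exact ⟨h5, h6⟩)
        (fun i hQ hR => by rw [hR.1] at hQ; omega)]
      rw [card_filter_single]
      by_cases hc : (v a).val < (w a).val + 1 <;> simp [hc]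
    rw [e1, e2] at h1
    have : (v a).val < (w a).val + 1 := by by_contra hc; rw [if_neg hc] at h1; omega
    have hne' : (v a).val ≠ (w a).val := fun hc => hamem (Fin.ext hc).symm
    omega
  -- choose b
  have hj0 : w.symm (v a) ∈ univ.filter
      (fun j : Fin n => a < j ∧ (v a).val ≤ (w j).val ∧ (w j).val < (w a).val) := by
    rw [mem_filter]
    have hw : w (w.symm (v a)) = v a := w.apply_symm_apply _
    have hja : w.symm (v a) ≠ a := by
      intro hj
      rw [hj] at hw
      exact hamem hw
    have hja2 : ¬ ((w.symm (v a)).val < a.val) := by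
      intro hj
      have h1 := hf _ hj
      rw [hw] at h1
      exact hvne _ hja h1.symm
    refine ⟨mem_univ _, ?_, ?_, ?_⟩
    · rw [Fin.lt_def]
      have : (w.symm (v a)).val ≠ a.val := fun hc => hja (Fin.ext hc)
      omega
    · rw [hw]
    · rw [hw]; exact hva
  have hBne : (univ.filter fun j : Fin n =>
      a < j ∧ (v a).val ≤ (w j).val ∧ (w j).val < (w a).val).Nonempty := ⟨_, hj0⟩
  set b := (univ.filter fun j : Fin n =>
      a < j ∧ (v a).val ≤ (w j).val ∧ (w j).val < (w a).val).min' hBne with hbdef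
  have hbmem := Finset.min'_mem _ hBne
  rw [← hbdef, mem_filter] at hbmem
  obtain ⟨-, hab, hwb1, hwb2⟩ := hbmem
  have hminb : ∀ c : Fin n, a.val < c.val → c.val < b.val →
      ¬((v a).val ≤ (w c).val ∧ (w c).val < (w a).val) := by
    intro c hc1 hc2 hc3
    have hcmem : c ∈ univ.filter fun j : Fin n =>
        a < j ∧ (v a).val ≤ (w j).val ∧ (w j).val < (w a).val :=
      mem_filter.mpr ⟨mem_univ _, Fin.lt_def.mpr hc1, hc3.1, hc3.2⟩
    have := Finset.min'_le _ c hcmem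
    rw [← hbdef, Fin.le_def] at this
    omega
  have hjb : ∀ i : Fin n, i.val < b.val → (w i).val ≠ (v a).val := by
    intro i hi hc
    have hwi : w i = v a := Fin.ext hc
    have : w.symm (v a) = i := by rw [← hwi]; exact w.symm_apply_apply i
    have hle := Finset.min'_le _ _ hj0
    rw [← hbdef, this, Fin.le_def] at hle
    omega
  have hab' : a.val < b.val := hab
  refine ⟨w * Equiv.swap a b, invCount_swap_lt w a b hab (Fin.lt_def.mpr hwb2), ?_⟩
  intro p q
  have hr := rankBound_swap_le w a b hab (Fin.lt_def.mpr hwb2) p q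
  by_cases hrect : a.val < p ∧ p ≤ b.val ∧ (w b).val < q ∧ q ≤ (w a).val
  · obtain ⟨hap, hpb, hq1, hq2⟩ := hrect
    rw [if_pos ⟨hap, hpb, hq1, hq2⟩] at hr
    have hvaq : (v a).val < q := by omega
    -- E1
    have E1 : rankBound n w p q = rankBound n w p ((v a).val + 1)
        + (univ.filter fun i : Fin n =>
            i.val < a.val ∧ (v a).val < (v i).val ∧ (v i).val < q).card := by
      rw [rankBound, rankBound]
      exact card_filter_partition
        (fun i => by
          rcases lt_trichotomy i.val a.val with hlt | heqv | hgt
          · have hwv := hf i hlt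
            have hvne' := hvne i (fun hh => by rw [hh] at hlt; omega)
            omega
          · have hia : i = a := Fin.ext heqv
            have e1 : (w i).val = (w a).val := by rw [hia]
            omega
          · by_cases hip : i.val < p
            · have hm' := hminb i hgt (by omega)
              omega
            · omega)
        (fun i hQ hR => by have hwv := hf i hR.1; omega)
    -- E2
    have E2 : rankBound n v p q = rankBound n v p ((v a).val + 1)
        + (univ.filter fun i : Fin n =>
            i.val < p ∧ (v a).val < (v i).val ∧ (v i).val < q).card := by
      rw [rankBound, rankBound]
      exact card_filter_partition (fun i => by omega) (fun i hQ hR => by omega)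
    have hST : (univ.filter fun i : Fin n =>
          i.val < a.val ∧ (v a).val < (v i).val ∧ (v i).val < q).card
        ≤ (univ.filter fun i : Fin n =>
            i.val < p ∧ (v a).val < (v i).val ∧ (v i).val < q).card :=
      card_filter_mono (fun i hi => ⟨by omega, hi.2⟩)
    -- E3
    have E3a : rankBound n w p ((v a).val + 1) = rankBound n w p ((v a).val) := by
      rw [rankBound, rankBound]
      apply card_filter_congr
      intro i
      by_cases hip : i.val < p
      · have := hjb i (by omega)
        omega
      · omega
    have E3b : rankBound n v p ((v a).val + 1) = rankBound n v p ((v a).val) + 1 := by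
      rw [rankBound, rankBound]
      rw [card_filter_partition
        (Q := fun i : Fin n => i.val < p ∧ (v i).val < (v a).val)
        (R := fun i : Fin n => i = a ∧ (i.val < p ∧ (v i).val < (v a).val + 1))
        (fun i => by
          constructor
          · rintro ⟨h5, h6⟩
            by_cases hia : i = a
            · exact Or.inr ⟨hia, h5, h6⟩
            · have := hvne i hia
              exact Or.inl ⟨h5, by omega⟩
          · rintro (⟨h5, h6⟩ | ⟨hia, h5, h6⟩)
            · exact ⟨h5, by omega⟩
            · exact ⟨h5, h6⟩)
        (fun i hQ hR => by
          have e : (v i).val = (v a).val := by rw [hR.1]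
          omega)]
      rw [card_filter_single, if_pos ⟨hap, Nat.lt_succ_self _⟩]
    have E3c := h p ((v a).val)
    omega
  · rw [if_neg hrect] at hr
    have := h p q
    omega

lemma invCount_lt_of_rank_le {n : ℕ} (w v : Equiv.Perm (Fin n))
    (h : ∀ p q, rankBound n w p q ≤ rankBound n v p q) (hne : w ≠ v) :
    invCount n v < invCount n w := by
  classical
  obtain ⟨N, hN⟩ : ∃ N, invCount n w ≤ N := ⟨invCount n w, le_refl _⟩
  induction N generalizing w with
  | zero =>
    obtain ⟨w', hlt, -⟩ := exists_descent w v hne h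
    omega
  | succ N ih =>
    obtain ⟨w', hlt, h'⟩ := exists_descent w v hne h
    by_cases hw'v : w' = v
    · rw [← hw'v]; exact hlt
    · have := ih w' h' hw'v (by omega)
      omega

/-! ### Section 5 : the canonical flag -/

noncomputable def canSet {n : ℕ} (w : Equiv.Perm (Fin n)) (p : ℕ) : Finset (Fin n) :=
  (univ.filter fun i : Fin n => i.val < p).image (fun i => Fin.rev (w i))

noncomputable def canFlag {n : ℕ} (w : Equiv.Perm (Fin n)) (p : ℕ) : Submodule ℂ (Fin n → ℂ) :=
  coordSpan n ↑(canSet w p)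

lemma revw_injective {n : ℕ} (w : Equiv.Perm (Fin n)) :
    Function.Injective (fun i : Fin n => Fin.rev (w i)) :=
  Fin.rev_injective.comp w.injective

lemma mem_canSet {n : ℕ} (w : Equiv.Perm (Fin n)) (p : ℕ) (j : Fin n) :
    j ∈ canSet w p ↔ ∃ i : Fin n, i.val < p ∧ Fin.rev (w i) = j := by
  simp [canSet]

lemma canSet_card {n : ℕ} (w : Equiv.Perm (Fin n)) (p : ℕ) (hp : p ≤ n) :
    (canSet w p).card = p := by
  rw [canSet, Finset.card_image_of_injective _ (revw_injective w), card_filter_lt_of_le p hp]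

lemma canFlag_finrank {n : ℕ} (w : Equiv.Perm (Fin n)) (p : ℕ) (hp : p ≤ n) :
    Module.finrank ℂ ↥(canFlag w p) = p := by
  rw [canFlag, finrank_coordSpan, canSet_card w p hp]

lemma canFlag_mono {n : ℕ} (w : Equiv.Perm (Fin n)) : Monotone (canFlag w) := by
  intro p p' hpp
  apply coordSpan_mono
  intro j hj
  rw [Finset.mem_coe, mem_canSet] at *
  obtain ⟨i, hi, rfl⟩ := hj
  exact ⟨i, by omega, rfl⟩

lemma canFlag_top {n : ℕ} (w : Equiv.Perm (Fin n)) (p : ℕ) (hp : n ≤ p) :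
    canFlag w p = ⊤ := by
  rw [canFlag, ← coordSpan_top]
  apply coordSpan_congr
  ext j
  simp only [Finset.coe_univ, Set.mem_univ, iff_true, Finset.mem_coe, mem_canSet]
  exact ⟨w.symm (Fin.rev j), by omega, by simp⟩

lemma coordSpan_finset_inf_set {n : ℕ} (S : Finset (Fin n)) (T : Set (Fin n))
    [DecidablePred (· ∈ T)] :
    coordSpan n ↑S ⊓ coordSpan n T = coordSpan n ↑(S.filter (· ∈ T)) := by
  rw [coordSpan_inf]
  apply coordSpan_congr
  ext j
  simp [Set.mem_inter_iff]

lemma canFlag_inf_std {n : ℕ} (w : Equiv.Perm (Fin n)) (p q : ℕ) (hq : q ≤ n) :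
    Module.finrank ℂ ↥(canFlag w p ⊓ stdFlag n q) = rankBound n w p q := by
  classical
  rw [canFlag, stdFlag_eq, coordSpan_finset_inf_set, finrank_coordSpan]
  have he : (canSet w p).filter (fun j => j ∈ {j : Fin n | n - q ≤ j.val})
      = (univ.filter fun i : Fin n => i.val < p ∧ (w i).val < q).image
          (fun i => Fin.rev (w i)) := by
    ext j
    simp only [mem_filter, mem_canSet, Set.mem_setOf_eq, Finset.mem_image, mem_univ, true_and]
    constructor
    · rintro ⟨⟨i, hi, rfl⟩, hj⟩
      rw [Fin.val_rev] at hj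
      have := (w i).isLt
      exact ⟨i, ⟨hi, by omega⟩, rfl⟩
    · rintro ⟨i, ⟨hi, hwi⟩, rfl⟩
      have := (w i).isLt
      refine ⟨⟨i, hi, rfl⟩, ?_⟩
      rw [Fin.val_rev]
      omega
  rw [he, Finset.card_image_of_injective _ (revw_injective w), rankBound]

lemma canFlag_inf_opp {n : ℕ} (w : Equiv.Perm (Fin n)) (p q : ℕ) :
    Module.finrank ℂ ↥(canFlag w p ⊓ oppFlag n q)
      = (univ.filter fun i : Fin n => i.val < p ∧ n - 1 - (w i).val < q).card := by
  classical
  rw [canFlag, oppFlag_eq, coordSpan_finset_inf_set, finrank_coordSpan]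
  have he : (canSet w p).filter (fun j => j ∈ {j : Fin n | j.val < q})
      = (univ.filter fun i : Fin n => i.val < p ∧ n - 1 - (w i).val < q).image
          (fun i => Fin.rev (w i)) := by
    ext j
    simp only [mem_filter, mem_canSet, Set.mem_setOf_eq, Finset.mem_image, mem_univ, true_and]
    constructor
    · rintro ⟨⟨i, hi, rfl⟩, hj⟩
      rw [Fin.val_rev] at hj
      have := (w i).isLt
      exact ⟨i, ⟨hi, by omega⟩, rfl⟩
    · rintro ⟨i, ⟨hi, hwi⟩, rfl⟩
      have := (w i).isLt
      refine ⟨⟨i, hi, rfl⟩, ?_⟩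
      rw [Fin.val_rev]
      omega
  rw [he, Finset.card_image_of_injective _ (revw_injective w)]

lemma canFlag_isCompleteFlag {n : ℕ} (w : Equiv.Perm (Fin n)) :
    IsCompleteFlag n (canFlag w) :=
  ⟨canFlag_mono w, fun p hp => canFlag_finrank w p hp, fun p hp => canFlag_top w p hp⟩

lemma canFlag_inSchubX {n : ℕ} (w : Equiv.Perm (Fin n)) : inSchubX n w (canFlag w) := by
  intro p q _ hq
  rw [canFlag_inf_std w p q hq]

lemma canFlag_inSchubY {n : ℕ} (w : Equiv.Perm (Fin n)) : inSchubY n w (canFlag w) := by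
  intro p q _ _
  rw [canFlag_inf_opp w p q]

/-! ### Section 6 : uniqueness -/

lemma basis_mem_of_schub {n : ℕ} {w : Equiv.Perm (Fin n)} {V : ℕ → Submodule ℂ (Fin n → ℂ)}
    (hV : IsCompleteFlag n V) (hX : inSchubX n w V) (hY : inSchubY n w V)
    (p : ℕ) (hp : p ≤ n) (i : Fin n) (hi : i.val < p) :
    stdBasisVec n (Fin.rev (w i)) ∈ V p := by
  classical
  set c := (w i).val with hcdef
  have hc : c < n := (w i).isLt
  have X1 : rankBound n w p (c + 1)
      = (univ.filter fun i' : Fin n => i'.val < p ∧ (w i').val < c).card + 1 := by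
    rw [rankBound]
    rw [card_filter_partition
      (Q := fun i' : Fin n => i'.val < p ∧ (w i').val < c)
      (R := fun i' : Fin n => i' = i ∧ (i'.val < p ∧ (w i').val < c + 1))
      (fun i' => by
        by_cases hii : i' = i
        · have : (w i').val = c := by rw [hii]
          constructor
          · intro hP; exact Or.inr ⟨hii, hP⟩
          · intro _; rw [hii]; exact ⟨hi, by omega⟩
        · have : (w i').val ≠ c := fun hh => hii (w.injective (Fin.ext hh))
          omega)
      (fun i' hQ hR => by
        have : (w i').val = c := by rw [hR.1]
        omega)]
    rw [card_filter_single, if_pos ⟨hi, Nat.lt_succ_self _⟩]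
  have X2 : p = (univ.filter fun i' : Fin n => i'.val < p ∧ (w i').val < c).card
      + (univ.filter fun i' : Fin n => i'.val < p ∧ n - 1 - (w i').val < n - c).card := by
    have X2' := card_filter_partition (P := fun i' : Fin n => i'.val < p)
      (Q := fun i' : Fin n => i'.val < p ∧ (w i').val < c)
      (R := fun i' : Fin n => i'.val < p ∧ n - 1 - (w i').val < n - c)
      (fun i' => by have := (w i').isLt; omega)
      (fun i' hQ hR => by have := (w i').isLt; omega)
    rw [card_filter_lt_of_le p hp] at X2'
    exact X2'
  have hA := hX p (c + 1) hp (by omega)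
  have hB := hY p (n - c) hp (by omega)
  rw [X1] at hA
  have hsum := finrank_add_le_of_le (A := V p ⊓ stdFlag n (c + 1))
    (B := V p ⊓ oppFlag n (n - c)) (W := V p) inf_le_left inf_le_left
  rw [hV.2.1 p hp] at hsum
  have hsing : stdFlag n (c + 1) ⊓ oppFlag n (n - c)
      = coordSpan n ↑({Fin.rev (w i)} : Finset (Fin n)) := by
    rw [stdFlag_eq, oppFlag_eq, coordSpan_inf]
    apply coordSpan_congr
    ext j
    simp only [Set.mem_inter_iff, Set.mem_setOf_eq, Finset.coe_singleton,
      Set.mem_singleton_iff]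
    rw [Fin.ext_iff, Fin.val_rev]
    have := j.isLt
    omega
  have hfin1 : Module.finrank ℂ ↥(coordSpan n ↑({Fin.rev (w i)} : Finset (Fin n))) = 1 := by
    rw [finrank_coordSpan, Finset.card_singleton]
  have hABle : (V p ⊓ stdFlag n (c + 1)) ⊓ (V p ⊓ oppFlag n (n - c))
      ≤ coordSpan n ↑({Fin.rev (w i)} : Finset (Fin n)) :=
    le_trans (inf_le_inf inf_le_right inf_le_right) (le_of_eq hsing)
  have hge1 : 1 ≤ Module.finrank ℂ
      ↥((V p ⊓ stdFlag n (c + 1)) ⊓ (V p ⊓ oppFlag n (n - c))) := by omega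
  have heq := Submodule.eq_of_le_of_finrank_le hABle (by rw [hfin1]; exact hge1)
  have hmem : stdBasisVec n (Fin.rev (w i))
      ∈ coordSpan n ↑({Fin.rev (w i)} : Finset (Fin n)) :=
    Submodule.subset_span ⟨Fin.rev (w i), by simp, rfl⟩
  rw [← heq] at hmem
  exact (le_trans inf_le_left inf_le_left : _ ≤ V p) hmem

lemma eq_canFlag {n : ℕ} {w : Equiv.Perm (Fin n)} {V : ℕ → Submodule ℂ (Fin n → ℂ)}
    (hV : IsCompleteFlag n V) (hX : inSchubX n w V) (hY : inSchubY n w V) :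
    V = canFlag w := by
  funext p
  by_cases hp : p ≤ n
  · have hle : canFlag w p ≤ V p := by
      rw [canFlag, coordSpan]
      rw [Submodule.span_le]
      rintro x ⟨j, hj, rfl⟩
      rw [Finset.mem_coe, mem_canSet] at hj
      obtain ⟨i, hi, rfl⟩ := hj
      exact basis_mem_of_schub hV hX hY p hp i hi
    have hfr : Module.finrank ℂ ↥(V p) ≤ Module.finrank ℂ ↥(canFlag w p) := by
      rw [hV.2.1 p hp, canFlag_finrank w p hp]
    exact (Submodule.eq_of_le_of_finrank_le hle hfr).symm
  · rw [hV.2.2 p (by omega), canFlag_top w p (by omega)]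

/-- Duality theorem for the flag variety: (a) if `inv(w) = inv(v)` and `w ≠ v` then
`X_w ∩ Y_v = ∅`; (b) `X_w ∩ Y_w` contains exactly one flag; (c) if `inv(w) < inv(v)`
then `X_w ∩ Y_v = ∅`. -/
theorem flag_duality (n : ℕ) (hn : 0 < n) (w v : Equiv.Perm (Fin n)) :
    ((invCount n w = invCount n v → w ≠ v →
      ¬ ∃ V, IsCompleteFlag n V ∧ inSchubX n w V ∧ inSchubY n v V)) ∧
    (∃! V, IsCompleteFlag n V ∧ inSchubX n w V ∧ inSchubY n w V) ∧
    ((invCount n w < invCount n v →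
      ¬ ∃ V, IsCompleteFlag n V ∧ inSchubX n w V ∧ inSchubY n v V)) := by
  refine ⟨?_, ?_, ?_⟩
  · rintro heq hne ⟨V, hV, hX, hY⟩
    have hr := geom_rank_le hV hX hY
    have := invCount_lt_of_rank_le w v hr hne
    omega
  · refine ⟨canFlag w, ⟨canFlag_isCompleteFlag w, canFlag_inSchubX w, canFlag_inSchubY w⟩, ?_⟩
    rintro V ⟨hV, hX, hY⟩
    exact eq_canFlag hV hX hY
  · rintro hlt ⟨V, hV, hX, hY⟩
    have hr := geom_rank_le hV hX hY
    by_cases hwv : w = v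
    · rw [hwv] at hlt; omega
    · have := invCount_lt_of_rank_le w v hr hwv
      omega
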